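/- Instability of the disease-free steady state (Theorem 3). Let λ, γ > 0 and V̄ = λ/γ. Let τ : (0,∞) → [0,∞), let φ : (0,∞) → (0,∞) be differentiable, let Λ̄ < 0 (the adjoint eigenvalue at V̄, negative because Λ(·) is decreasing and V∞ < V̄), and let K > 0 be a constant with τ(x)·φ'(x) ≤ K·φ(x) for all x > 0. Let V : [0,∞) → [0,∞) be differentiable and u : (0,∞)×[0,∞) → [0,∞) be such that for all t ≥ 0: the functions u(·,t)φ, τ(·)u(·,t) and |φ'(·)|τ(·)u(·,t) are integrable on (0,∞); V'(t) = λ − γV(t) − V(t)·∫₀^∞ τ(x)u(x,t)dx; t ↦ M(t) := ∫₀^∞ u(x,t)φ(x)dx is differentiable with M'(t) = −Λ̄·M(t) + (V(t) − V̄)·∫₀^∞ τ(x)φ'(x)u(x,t)dx; and V(0) ≤ V̄. If M(0) > 0, then the quantity Q(t) := M(t) + (V̄ − V(t)) (a sum of two nonnegative terms, since V(t) ≤ V̄ for all t ≥ 0) does not tend to 0 as t → ∞; in particular the solution does not converge to the zero steady state, which is therefore unstable. -/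

import Mathlib

open MeasureTheory Set Filter Topology

private lemma mono_aux {f f' : ℝ → ℝ} {a : ℝ}
    (hd : ∀ t ∈ Ici a, HasDerivAt f (f' t) t)
    (h0 : ∀ t ∈ Ici a, 0 ≤ f' t) : MonotoneOn f (Ici a) := by
  apply monotoneOn_of_deriv_nonneg (convex_Ici a)
    (fun t ht => (hd t ht).continuousAt.continuousWithinAt)
  · intro t ht
    rw [interior_Ici] at ht
    exact (hd t (mem_Ici.2 (le_of_lt ht))).differentiableAt.differentiableWithinAt
  · intro t ht
    rw [interior_Ici] at ht
    rw [(hd t (mem_Ici.2 (le_of_lt ht))).deriv]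
    exact h0 t (mem_Ici.2 (le_of_lt ht))

private lemma exp_deriv_aux (c t : ℝ) :
    HasDerivAt (fun s => Real.exp (c * s)) (c * Real.exp (c * t)) t := by
  have h := ((hasDerivAt_id t).const_mul c).exp
  simpa [mul_comm] using h

/-- **Instability of the disease-free steady state** (Theorem 3 of the paper): with
`V̄ = λ/γ`, adjoint eigenvalue `Λ̄ = Λ(V̄) < 0`, weight bound `τ φ' ≤ K φ`, and a
solution `(V, u)` of the prion system (in the weak, duality form) with `0 ≤ V(0) ≤ V̄`
and positive initial weighted polymer mass `M(0) > 0`, the monomer level stays below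
`V̄`, and the nonnegative quantity `Q(t) = M(t) + (V̄ − V(t))` does not tend to `0` as
`t → ∞`: the zero steady state is unstable. Here `M(t) = ∫ u(x,t) φ(x) dx`. -/
theorem zero_state_instability
    (lam gam Lam K : ℝ)
    (hlam : 0 < lam) (hgam : 0 < gam) (hLam : Lam < 0) (hK : 0 < K)
    (tau phi phi' : ℝ → ℝ)
    (htau_nn : ∀ x > 0, 0 ≤ tau x)
    (hphi_pos : ∀ x > 0, 0 < phi x)
    (hphi_deriv : ∀ x > 0, HasDerivAt phi (phi' x) x)
    (hbound : ∀ x > 0, tau x * phi' x ≤ K * phi x)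
    (V : ℝ → ℝ) (u : ℝ → ℝ → ℝ)
    (hV_nn : ∀ t ≥ 0, 0 ≤ V t)
    (hu_nn : ∀ t ≥ 0, ∀ x > 0, 0 ≤ u x t)
    (hint_uphi : ∀ t ≥ 0, IntegrableOn (fun x => u x t * phi x) (Ioi 0))
    (hint_tau : ∀ t ≥ 0, IntegrableOn (fun x => tau x * u x t) (Ioi 0))
    (hint_phi' : ∀ t ≥ 0, IntegrableOn (fun x => |phi' x| * tau x * u x t) (Ioi 0))
    -- the monomer equation
    (hV_deriv : ∀ t ≥ 0, HasDerivAt V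
        (lam - gam * V t - V t * ∫ x in Ioi (0:ℝ), tau x * u x t) t)
    -- the weak form of the polymer equation tested against φ
    (hM_deriv : ∀ t ≥ 0, HasDerivAt (fun s => ∫ x in Ioi (0:ℝ), u x s * phi x)
        (-Lam * (∫ x in Ioi (0:ℝ), u x t * phi x)
          + (V t - lam / gam) * ∫ x in Ioi (0:ℝ), tau x * phi' x * u x t) t)
    (hV0 : V 0 ≤ lam / gam)
    (hM0 : 0 < ∫ x in Ioi (0:ℝ), u x 0 * phi x) :
    (∀ t ≥ 0, V t ≤ lam / gam) ∧
    ¬ Tendsto (fun t => (∫ x in Ioi (0:ℝ), u x t * phi x) + (lam / gam - V t))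
        atTop (nhds 0) := by
  have hVb_pos : 0 < lam / gam := div_pos hlam hgam
  set Vb := lam / gam with hVbdef
  have hgamVb : gam * Vb = lam := by
    rw [hVbdef]; field_simp
  set M : ℝ → ℝ := fun t => ∫ x in Ioi (0:ℝ), u x t * phi x with hMdef
  set J : ℝ → ℝ := fun t => ∫ x in Ioi (0:ℝ), tau x * phi' x * u x t with hJdef
  set I : ℝ → ℝ := fun t => ∫ x in Ioi (0:ℝ), tau x * u x t with hIdef
  have hI_nn : ∀ t ≥ 0, 0 ≤ I t := fun t ht =>
    setIntegral_nonneg measurableSet_Ioi fun x hx =>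
      mul_nonneg (htau_nn x hx) (hu_nn t ht x hx)
  have hM_nn : ∀ t ≥ 0, 0 ≤ M t := fun t ht =>
    setIntegral_nonneg measurableSet_Ioi fun x hx =>
      mul_nonneg (hu_nn t ht x hx) (le_of_lt (hphi_pos x hx))
  -- Part 1: V stays below Vb
  have hVle : ∀ t ≥ 0, V t ≤ Vb := by
    have hmono : MonotoneOn (fun t => (Vb - V t) * Real.exp (gam * t)) (Ici 0) := by
      apply mono_aux (f' := fun t => V t * I t * Real.exp (gam * t))
      · intro t ht
        rw [mem_Ici] at ht
        have hd := ((hasDerivAt_const t Vb).sub (hV_deriv t ht)).mul (exp_deriv_aux gam t)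
        convert hd using 1
        all_goals first | rfl | (rw [← hgamVb]; simp only [Pi.sub_apply]; ring)
      · intro t ht
        rw [mem_Ici] at ht
        exact mul_nonneg (mul_nonneg (hV_nn t ht) (hI_nn t ht)) (Real.exp_pos _).le
    intro t ht
    have h0 : (0:ℝ) ∈ Ici (0:ℝ) := self_mem_Ici
    have := hmono h0 (mem_Ici.2 ht) ht
    simp only [mul_zero, Real.exp_zero, mul_one] at this
    have hE := Real.exp_pos (gam * t)
    nlinarith [this, hE, hV0]
  -- integrability of τ φ' u
  have hJ_int : ∀ t ≥ 0, IntegrableOn (fun x => tau x * phi' x * u x t) (Ioi 0) := by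
    intro t ht
    have h1 : (fun x => tau x * phi' x * u x t) =ᵐ[volume.restrict (Ioi 0)]
        (fun x => deriv phi x * (tau x * u x t)) := by
      filter_upwards [ae_restrict_mem measurableSet_Ioi] with x hx
      rw [(hphi_deriv x hx).deriv]; ring
    have hmeas : AEStronglyMeasurable (fun x => tau x * phi' x * u x t)
        (volume.restrict (Ioi 0)) := by
      exact (((measurable_deriv phi).aemeasurable.mul
        (hint_tau t ht).aestronglyMeasurable.aemeasurable).aestronglyMeasurable).congr h1.symm
    apply Integrable.mono' (hint_phi' t ht) hmeas
    filter_upwards [ae_restrict_mem measurableSet_Ioi] with x hx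
    have h2 := htau_nn x hx
    have h3 := hu_nn t ht x hx
    rw [Real.norm_eq_abs, abs_mul, abs_mul, abs_of_nonneg h2, abs_of_nonneg h3]
    apply le_of_eq; ring
  -- J ≤ K M
  have hJle : ∀ t ≥ 0, J t ≤ K * M t := by
    intro t ht
    have h : J t ≤ ∫ x in Ioi (0:ℝ), K * (u x t * phi x) := by
      apply setIntegral_mono_on (hJ_int t ht) ((hint_uphi t ht).const_mul K)
        measurableSet_Ioi
      intro x hx
      have h1 := hbound x hx
      have h2 := hu_nn t ht x hx
      nlinarith [mul_le_mul_of_nonneg_right h1 h2]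
    calc J t ≤ ∫ x in Ioi (0:ℝ), K * (u x t * phi x) := h
      _ = K * M t := by rw [MeasureTheory.integral_const_mul]
  -- key differential inequality
  have hkey : ∀ t ≥ 0, (-Lam - K * (Vb - V t)) * M t
      ≤ -Lam * M t + (V t - Vb) * J t := by
    intro t ht
    have h3 : (V t - Vb) * (K * M t) ≤ (V t - Vb) * J t :=
      mul_le_mul_of_nonpos_left (hJle t ht) (by linarith [hVle t ht])
    nlinarith [h3]
  -- positivity of M via exponential lower bound
  have hMpos : ∀ t ≥ 0, 0 < M t := by
    set c : ℝ := -Lam - K * Vb with hc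
    have hmono : MonotoneOn (fun t => M t * Real.exp (-c * t)) (Ici 0) := by
      apply mono_aux (f' := fun t =>
        (-Lam * M t + (V t - Vb) * J t) * Real.exp (-c * t)
          + M t * (-c * Real.exp (-c * t)))
      · intro t ht
        rw [mem_Ici] at ht
        exact (hM_deriv t ht).mul (exp_deriv_aux (-c) t)
      · intro t ht
        rw [mem_Ici] at ht
        have h4 : (-Lam - K * (Vb - V t)) * M t + (-c) * M t = K * V t * M t := by
          rw [hc]; ring
        have h5 : 0 ≤ K * V t * M t :=
          mul_nonneg (mul_nonneg hK.le (hV_nn t ht)) (hM_nn t ht)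
        have h6 : 0 ≤ (-Lam * M t + (V t - Vb) * J t) + (-c) * M t := by
          linarith [hkey t ht]
        nlinarith [mul_nonneg h6 (Real.exp_pos (-c * t)).le]
    intro t ht
    have := hmono self_mem_Ici (mem_Ici.2 ht) ht
    simp only [mul_zero, Real.exp_zero, mul_one] at this
    nlinarith [Real.exp_pos (-c * t), hM0, this]
  refine ⟨hVle, ?_⟩
  intro hT
  -- eventually Q t < -Lam / K
  have hε : (0:ℝ) < -Lam / K := div_pos (neg_pos.2 hLam) hK
  have hev1 := hT (Iio_mem_nhds hε)
  obtain ⟨T₀, hT₀⟩ := (eventually_atTop.1 hev1)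
  set T : ℝ := max T₀ 0 with hTdef
  have hT_nn : (0:ℝ) ≤ T := le_max_right _ _
  -- M is monotone on [T, ∞)
  have hmono : MonotoneOn M (Ici T) := by
    apply mono_aux (f' := fun t => -Lam * M t + (V t - Vb) * J t)
    · intro t ht
      rw [mem_Ici] at ht
      exact hM_deriv t (le_trans hT_nn ht)
    · intro t ht
      rw [mem_Ici] at ht
      have ht0 : (0:ℝ) ≤ t := le_trans hT_nn ht
      have hQ : M t + (Vb - V t) < -Lam / K :=
        hT₀ t (le_trans (le_max_left _ _) ht)
      have hVbV : 0 ≤ Vb - V t := by linarith [hVle t ht0]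
      have hKQ : K * (Vb - V t) < -Lam := by
        have : Vb - V t < -Lam / K := by linarith [hM_nn t ht0]
        calc K * (Vb - V t) < K * (-Lam / K) :=
              (mul_lt_mul_iff_right₀ hK).2 this
          _ = -Lam := by field_simp
      have h7 : 0 ≤ (-Lam - K * (Vb - V t)) * M t :=
        mul_nonneg (by linarith) (hM_nn t ht0)
      linarith [hkey t ht0, h7]
    -- contradiction: Q t ≥ M t ≥ M T > 0 eventually
  have hev2 := hT (Iio_mem_nhds (hMpos T hT_nn))
  obtain ⟨T₁, hT₁⟩ := (eventually_atTop.1 hev2)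
  set t := max T T₁ with htdef
  have ht1 : T ≤ t := le_max_left _ _
  have ht0 : (0:ℝ) ≤ t := le_trans hT_nn ht1
  have hA : M t + (Vb - V t) < M T := hT₁ t (le_max_right _ _)
  have hB : M T ≤ M t := hmono self_mem_Ici (mem_Ici.2 ht1) ht1
  have hC : 0 ≤ Vb - V t := by linarith [hVle t ht0]
  linarith
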